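/- Let T > 0 and c < 0. The function h(z) = i z cos(Tz) + √(z² + c) · sin(Tz) (where √(z²+c) is purely imaginary for 0 < z < √(−c)) has at least one root in each interval I_k = ((k−1)π/T, kπ/T] for each integer k with 1 ≤ k ≤ ⌊T√(−c)/π⌋ that is contained in (0, √(−c)). -/

import Mathlib

open Real

/-- for T > 0 and c < 0, the function
h(z) = i z cos(Tz) + √(z²+c) sin(Tz), with √(z²+c) = i√(−z²−c) purely imaginary on
0 < z < √(−c), has at least one root in each interval I_k = ((k−1)π/T, kπ/T]
contained in (0, √(−c)), for 1 ≤ k ≤ ⌊T√(−c)/π⌋. -/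
theorem stmt10 (T c : ℝ) (hT : 0 < T) (hc : c < 0)
    (h : ℝ → ℂ)
    (hdef : ∀ z : ℝ, h z = Complex.I * (z : ℂ) * Complex.cos (T * z)
      + Complex.I * (Real.sqrt (-z ^ 2 - c) : ℂ) * Complex.sin (T * z))
    (k : ℕ) (hk1 : 1 ≤ k) (hk2 : k ≤ ⌊T * Real.sqrt (-c) / π⌋₊)
    (hsub : Set.Ioc (((k : ℝ) - 1) * π / T) ((k : ℝ) * π / T)
      ⊆ Set.Ioo 0 (Real.sqrt (-c))) :
    ∃ z ∈ Set.Ioc (((k : ℝ) - 1) * π / T) ((k : ℝ) * π / T), h z = 0 := by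
  have hπ := Real.pi_pos
  set a := ((k : ℝ) - 1) * π / T with ha
  set b := (k : ℝ) * π / T with hb
  set m := ((k : ℝ) - 1/2) * π / T with hm
  have ham : a < m := by
    rw [ha, hm]
    gcongr
    norm_num
  have hmb : m < b := by
    rw [hb, hm]
    gcongr
    norm_num
  -- the real function g
  set g : ℝ → ℝ := fun z => z * Real.cos (T * z) + Real.sqrt (-z ^ 2 - c) * Real.sin (T * z)
    with hgdef
  have hg : Continuous g := by
    apply Continuous.add
    · exact continuous_id.mul (Real.continuous_cos.comp (continuous_const.mul continuous_id))
    · exact (Real.continuous_sqrt.comp (by continuity)).mul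
        (Real.continuous_sin.comp (continuous_const.mul continuous_id))
  have hmem_m : m ∈ Set.Ioc a b := ⟨ham, le_of_lt hmb⟩
  have hmem_b : b ∈ Set.Ioc a b := ⟨ham.trans hmb, le_rfl⟩
  have hm' := hsub hmem_m
  have hb' := hsub hmem_b
  have hbpos : 0 < b := hb'.1
  -- sqrt(-m^2 - c) > 0
  have hm2 : m ^ 2 < -c := by
    have h1 : 0 ≤ Real.sqrt (-c) := Real.sqrt_nonneg _
    have h2 : m < Real.sqrt (-c) := hm'.2
    have h3 : m ^ 2 < Real.sqrt (-c) ^ 2 := by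
      apply pow_lt_pow_left₀ h2 (le_of_lt hm'.1) (by norm_num)
    rwa [Real.sq_sqrt (by linarith : (0:ℝ) ≤ -c)] at h3
  have hsqrtm : 0 < Real.sqrt (-m ^ 2 - c) := Real.sqrt_pos.mpr (by linarith)
  -- trig values at b
  have hTb : T * b = (k : ℝ) * π := by
    rw [hb]; field_simp
  have hsinb : Real.sin (T * b) = 0 := by rw [hTb]; exact Real.sin_nat_mul_pi k
  have hcosb : Real.cos (T * b) = (-1) ^ k := by
    rw [hTb]
    have := Real.cos_nat_mul_pi_sub 0 k
    simpa using this
  -- trig values at m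
  have hTm : T * m = (k : ℝ) * π - π / 2 := by
    rw [hm]; field_simp
  have hcosm : Real.cos (T * m) = 0 := by
    rw [hTm, Real.cos_nat_mul_pi_sub, Real.cos_pi_div_two, mul_zero]
  have hsinm : Real.sin (T * m) = -(-1) ^ k := by
    rw [hTm, Real.sin_nat_mul_pi_sub, Real.sin_pi_div_two, mul_one]
  have hgb : g b = b * (-1) ^ k := by simp [hgdef, hsinb, hcosb]
  have hgm : g m = -((-1) ^ k * Real.sqrt (-m ^ 2 - c)) := by
    simp [hgdef, hcosm, hsinm]; ring
  -- 0 lies between g m and g b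
  have h0 : (0 : ℝ) ∈ Set.uIcc (g m) (g b) := by
    rw [Set.mem_uIcc]
    rcases Nat.even_or_odd k with he | ho
    · rw [he.neg_one_pow] at hgm hgb
      left
      constructor <;> nlinarith
    · rw [ho.neg_one_pow] at hgm hgb
      right
      constructor <;> nlinarith
  have hiv := intermediate_value_uIcc (f := g) (a := m) (b := b) hg.continuousOn
  obtain ⟨z, hz, hgz⟩ := hiv h0
  rw [Set.uIcc_of_le (le_of_lt hmb)] at hz
  refine ⟨z, ⟨lt_of_lt_of_le ham hz.1, hz.2⟩, ?_⟩
  have hhz : h z = Complex.I * ((g z : ℝ) : ℂ) := by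
    rw [hdef z, hgdef]
    push_cast [Complex.ofReal_cos, Complex.ofReal_sin]
    ring
  rw [hhz, hgz]
  simp
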